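/- arXiv:1805.04305 — 2 statements merged into one kernel-verified Lean document; each statement's English description precedes it below -/
import Mathlib

section
/- For a general force g (not necessarily linear) and filters satisfying ψ₁ = sinc · φ, one step of the trigonometric integrator satisfies the identity ℋ(q_{n+1}, q̇_{n+1}) + (1/2) Re((Φ q_n)^* g(Φ q_{n+1})) = ℋ(q_n, q̇_n) + (1/2) Re((Φ q_{n+1})^* g(Φ q_n)), where ℋ(q, q̇) = (1/2)‖Ω q‖² + (1/2)‖q̇‖² − (1/2) Re((cos(hΩ) Φ q)^* g(Φ q)) − (1/8) h² ‖Ψ₁ g(Φ q)‖². -/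
open scoped BigOperators

/-- `sinc ξ = sin ξ / ξ` with `sinc 0 = 1`. -/
noncomputable def sinc (x : ℝ) : ℝ := if x = 0 then 1 else Real.sin x / x

/-- Entrywise (diagonal-matrix) action of a real function family on `ℂ^d`. -/
noncomputable def dOp {d : ℕ} (f : Fin d → ℝ) (q : EuclideanSpace ℂ (Fin d)) :
    EuclideanSpace ℂ (Fin d) := WithLp.toLp 2 (fun i => (f i : ℂ) * q i)

/-- Modified energy for a general force `g`:
`ℋ(q,q̇) = ½‖Ωq‖² + ½‖q̇‖² − ½ Re((cos(hΩ)Φq)* g(Φq)) − ⅛h²‖Ψ₁ g(Φq)‖²`. -/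
noncomputable def modEnergyG {d : ℕ} (h : ℝ) (ω : Fin d → ℝ) (ψ₁ φ : ℝ → ℝ)
    (g : EuclideanSpace ℂ (Fin d) → EuclideanSpace ℂ (Fin d))
    (q p : EuclideanSpace ℂ (Fin d)) : ℝ :=
  (1 / 2) * ‖dOp ω q‖ ^ 2 + (1 / 2) * ‖p‖ ^ 2
    - (1 / 2) * (inner (𝕜 := ℂ) (dOp (fun i => Real.cos (h * ω i)) (dOp (fun i => φ (h * ω i)) q))
        (g (dOp (fun i => φ (h * ω i)) q))).re
    - (1 / 8) * h ^ 2 * ‖dOp (fun i => ψ₁ (h * ω i)) (g (dOp (fun i => φ (h * ω i)) q))‖ ^ 2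

/-- for a general force `g` and filters with `ψ₁ = sinc·φ`, one step of the
trigonometric integrator satisfies
`ℋ(q_{n+1},q̇_{n+1}) + ½Re((Φq_n)* g(Φq_{n+1})) = ℋ(q_n,q̇_n) + ½Re((Φq_{n+1})* g(Φq_n))`. -/
theorem modified_energy_identity_general {d : ℕ} (h : ℝ) (hh : 0 < h)
    (ω : Fin d → ℝ) (hω : ∀ i, 0 ≤ ω i) (ψ₁ φ : ℝ → ℝ)
    (hfilter : ∀ ξ : ℝ, ψ₁ ξ = sinc ξ * φ ξ)
    (g : EuclideanSpace ℂ (Fin d) → EuclideanSpace ℂ (Fin d))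
    (qn pn qnext pnext : EuclideanSpace ℂ (Fin d))
    (hstepq : qnext = dOp (fun i => Real.cos (h * ω i)) qn
        + h • dOp (fun i => sinc (h * ω i)) pn
        + (h ^ 2 / 2) • dOp (fun i => sinc (h * ω i))
            (dOp (fun i => ψ₁ (h * ω i)) (g (dOp (fun i => φ (h * ω i)) qn))))
    (hstepp : pnext = -(dOp (fun i => ω i * Real.sin (h * ω i)) qn)
        + dOp (fun i => Real.cos (h * ω i)) pn
        + (h / 2) • (dOp (fun i => Real.cos (h * ω i))
              (dOp (fun i => ψ₁ (h * ω i)) (g (dOp (fun i => φ (h * ω i)) qn)))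
            + dOp (fun i => ψ₁ (h * ω i)) (g (dOp (fun i => φ (h * ω i)) qnext)))) :
    modEnergyG h ω ψ₁ φ g qnext pnext
        + (1 / 2) * (inner (𝕜 := ℂ) (dOp (fun i => φ (h * ω i)) qn)
            (g (dOp (fun i => φ (h * ω i)) qnext))).re
      = modEnergyG h ω ψ₁ φ g qn pn
        + (1 / 2) * (inner (𝕜 := ℂ) (dOp (fun i => φ (h * ω i)) qnext)
            (g (dOp (fun i => φ (h * ω i)) qn))).re := by
  classical
  have hsum : ∀ x : EuclideanSpace ℂ (Fin d), ‖x‖ ^ 2 = ∑ i, Complex.normSq (x i) := by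
    intro x
    rw [EuclideanSpace.norm_eq, Real.sq_sqrt (by positivity)]
    simp [Complex.sq_norm]
  have hinner : ∀ x y : EuclideanSpace ℂ (Fin d),
      (inner (𝕜 := ℂ) x y).re = ∑ i, ((starRingEnd ℂ) (x i) * y i).re := by
    intro x y
    rw [PiLp.inner_apply]
    simp [RCLike.inner_apply, Complex.re_sum]
    exact Finset.sum_congr rfl fun i _ => by ring
  have hsinc : ∀ x : ℝ, x * sinc x = Real.sin x := by
    intro x
    unfold sinc
    split_ifs with hx
    · simp [hx]
    · field_simp
  simp only [modEnergyG, hsum, hinner]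
  rw [← sub_eq_zero]
  simp only [Finset.mul_sum, ← Finset.sum_add_distrib, ← Finset.sum_sub_distrib]
  apply Finset.sum_eq_zero
  intro i _
  have hq := congrArg (fun v : EuclideanSpace ℂ (Fin d) => v i) hstepq
  have hp := congrArg (fun v : EuclideanSpace ℂ (Fin d) => v i) hstepp
  simp only [PiLp.add_apply, PiLp.smul_apply, PiLp.neg_apply, Complex.real_smul, dOp, PiLp.toLp_apply] at hq hp ⊢
  have hcs : Real.cos (h * ω i) ^ 2 + Real.sin (h * ω i) ^ 2 = 1 :=
    Real.cos_sq_add_sin_sq (h * ω i)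
  have hs : Real.sin (h * ω i) = h * ω i * sinc (h * ω i) := (hsinc (h * ω i)).symm
  rw [hs] at hcs
  simp only [hfilter, hs, hq, hp, Complex.normSq_apply, Complex.add_re, Complex.add_im,
    Complex.mul_re, Complex.mul_im, Complex.neg_re, Complex.neg_im, Complex.ofReal_re,
    Complex.ofReal_im, Complex.conj_re, Complex.conj_im]
  set c := Real.cos (h * ω i)
  set σ := sinc (h * ω i)
  set f := φ (h * ω i)
  set A := qn i
  set B := pn i
  set G := g (WithLp.toLp 2 (fun j => (φ (h * ω j) : ℂ) * qn j)) i
  set K := g (WithLp.toLp 2 (fun j => (φ (h * ω j) : ℂ) * qnext j)) i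
  have key : c ^ 2 + (h * ω i * σ) ^ 2 - 1 = 0 := by linarith [hcs]
  linear_combination
    ((1/2) * B.re ^ 2 + (1/2) * B.im ^ 2 - (1/2) * f * (A.re * K.re + A.im * K.im)
      + (1/2) * (ω i) ^ 2 * (A.re ^ 2 + A.im ^ 2)
      + (1/2) * h * σ * f * (B.re * G.re + B.im * G.im)
      + (1/8) * h ^ 2 * σ ^ 2 * f ^ 2 * (G.re ^ 2 + G.im ^ 2)) * key
end

section
/- (All-time near-conservation of energy.) In the setting of Theorem 1 with filters satisfying |ψ₁(ξ)| ≤ c₀, |φ(ξ)| ≤ c₀, |φ(ξ)−1| ≤ c₁|ξ|, and with ω the minimal nonzero frequency, there is a constant C depending only on c₀, c₁, ‖A‖, ‖q_0‖, ‖Ωq_0‖, ‖q̇_0‖ and sup_n ‖q_n‖ such that |H(q_n, q̇_n) − H(q_0, q̇_0)| ≤ C min(h, ω^{-1}) + C h² for all n ∈ ℕ. -/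
open scoped BigOperators

/-- Position update of the trigonometric integrator for the linear force `g(q) = -A q`:
`q_{n+1} = cos(hΩ) q_n + h sinc(hΩ) q̇_n + ½h² sinc(hΩ) Ψ₁ g(Φ q_n)`. -/
noncomputable def trigStepQ {d : ℕ} (h : ℝ) (ω : Fin d → ℝ) (ψ₁ φ : ℝ → ℝ)
    (A : EuclideanSpace ℂ (Fin d) →L[ℂ] EuclideanSpace ℂ (Fin d))
    (q p : EuclideanSpace ℂ (Fin d)) : EuclideanSpace ℂ (Fin d) :=
  dOp (fun i => Real.cos (h * ω i)) q + h • dOp (fun i => sinc (h * ω i)) p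
    + (h ^ 2 / 2) • dOp (fun i => sinc (h * ω i))
        (dOp (fun i => ψ₁ (h * ω i)) (-(A (dOp (fun i => φ (h * ω i)) q))))

/-- Velocity update of the trigonometric integrator for the linear force `g(q) = -A q`:
`q̇_{n+1} = -Ω sin(hΩ) q_n + cos(hΩ) q̇_n + ½h (cos(hΩ) Ψ₁ g(Φ q_n) + Ψ₁ g(Φ q_{n+1}))`. -/
noncomputable def trigStepP {d : ℕ} (h : ℝ) (ω : Fin d → ℝ) (ψ₁ φ : ℝ → ℝ)
    (A : EuclideanSpace ℂ (Fin d) →L[ℂ] EuclideanSpace ℂ (Fin d))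
    (q p : EuclideanSpace ℂ (Fin d)) : EuclideanSpace ℂ (Fin d) :=
  -(dOp (fun i => ω i * Real.sin (h * ω i)) q) + dOp (fun i => Real.cos (h * ω i)) p
    + (h / 2) • (dOp (fun i => Real.cos (h * ω i))
          (dOp (fun i => ψ₁ (h * ω i)) (-(A (dOp (fun i => φ (h * ω i)) q))))
        + dOp (fun i => ψ₁ (h * ω i))
            (-(A (dOp (fun i => φ (h * ω i)) (trigStepQ h ω ψ₁ φ A q p)))))

/-- The modified energy
`ℋ(q,q̇) = ½‖Ωq‖² + ½‖q̇‖² + ½ Re((cos(hΩ)Φq)* A Φq) − ⅛h²‖Ψ₁ A Φq‖²`. -/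
noncomputable def modEnergy {d : ℕ} (h : ℝ) (ω : Fin d → ℝ) (ψ₁ φ : ℝ → ℝ)
    (A : EuclideanSpace ℂ (Fin d) →L[ℂ] EuclideanSpace ℂ (Fin d))
    (q p : EuclideanSpace ℂ (Fin d)) : ℝ :=
  (1 / 2) * ‖dOp ω q‖ ^ 2 + (1 / 2) * ‖p‖ ^ 2
    + (1 / 2) * (inner (𝕜 := ℂ) (dOp (fun i => Real.cos (h * ω i)) (dOp (fun i => φ (h * ω i)) q))
        (A (dOp (fun i => φ (h * ω i)) q))).re
    - (1 / 8) * h ^ 2 * ‖dOp (fun i => ψ₁ (h * ω i)) (A (dOp (fun i => φ (h * ω i)) q))‖ ^ 2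

/-- The total energy `H(q,q̇) = ½‖Ωq‖² + ½‖q̇‖² + ½ q* A q` of `q̈ = -Ω²q - Aq`. -/
noncomputable def energy {d : ℕ} (ω : Fin d → ℝ)
    (A : EuclideanSpace ℂ (Fin d) →L[ℂ] EuclideanSpace ℂ (Fin d))
    (q p : EuclideanSpace ℂ (Fin d)) : ℝ :=
  (1 / 2) * ‖dOp ω q‖ ^ 2 + (1 / 2) * ‖p‖ ^ 2 + (1 / 2) * (inner (𝕜 := ℂ) q (A q)).re

/-! ### Auxiliary scalar lemmas -/

lemma sinc_mul (x : ℝ) : x * sinc x = Real.sin x := by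
  unfold sinc; rcases eq_or_ne x 0 with h | h
  · simp [h]
  · rw [if_neg h]; field_simp

lemma abs_sinc_le_one (x : ℝ) : |sinc x| ≤ 1 := by
  unfold sinc; rcases eq_or_ne x 0 with h | h
  · simp [h]
  · rw [if_neg h, abs_div]
    rw [div_le_one (by positivity)]
    exact Real.abs_sin_le_abs

lemma pyth (x : ℝ) : Real.cos x ^ 2 + (x * sinc x) ^ 2 = 1 := by
  rw [sinc_mul]; rw [add_comm]; exact Real.sin_sq_add_cos_sq x

lemma abs_one_sub_cos (x : ℝ) : |1 - Real.cos x| ≤ |x| := by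
  have hc : Real.cos (x/2) ^ 2 = 1/2 + Real.cos x / 2 := by
    have := Real.cos_sq (x/2); rw [show 2*(x/2) = x by ring] at this; linarith
  have hs := Real.sin_sq_add_cos_sq (x/2)
  have h1 : 1 - Real.cos x = 2 * Real.sin (x/2) ^ 2 := by nlinarith
  have h3 : |Real.sin (x/2)| ≤ |x/2| := Real.abs_sin_le_abs
  have h4 : |Real.sin (x/2)| ≤ 1 := Real.abs_sin_le_one _
  have h5 : |x/2| = |x|/2 := by rw [abs_div]; simp
  rw [h1, abs_of_nonneg (by positivity)]
  nlinarith [abs_nonneg (Real.sin (x/2)), sq_abs (Real.sin (x/2))]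

/-! ### dOp API -/

section dOpAPI
variable {d : ℕ}

lemma dOp_add (f : Fin d → ℝ) (x y : EuclideanSpace ℂ (Fin d)) :
    dOp f (x + y) = dOp f x + dOp f y := by
  ext i; simp [dOp]; ring

lemma dOp_smul (f : Fin d → ℝ) (c : ℝ) (x : EuclideanSpace ℂ (Fin d)) :
    dOp f (c • x) = c • dOp f x := by
  ext i; simp [dOp]; ring

lemma dOp_neg (f : Fin d → ℝ) (x : EuclideanSpace ℂ (Fin d)) :
    dOp f (-x) = -dOp f x := by
  ext i; simp [dOp]

lemma dOp_sub (f : Fin d → ℝ) (x y : EuclideanSpace ℂ (Fin d)) :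
    dOp f (x - y) = dOp f x - dOp f y := by
  rw [sub_eq_add_neg, dOp_add, dOp_neg, sub_eq_add_neg]

lemma dOp_dOp (f g : Fin d → ℝ) (x : EuclideanSpace ℂ (Fin d)) :
    dOp f (dOp g x) = dOp (fun i => f i * g i) x := by
  ext i; simp [dOp]; ring

lemma dOp_one (x : EuclideanSpace ℂ (Fin d)) : dOp (fun _ => (1:ℝ)) x = x := by
  ext i; simp [dOp]

lemma dOp_scale (r : ℝ) (g : Fin d → ℝ) (x : EuclideanSpace ℂ (Fin d)) :
    dOp (fun i => r * g i) x = r • dOp g x := by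
  ext i; simp [dOp]; push_cast; ring

lemma dOp_add_fun (f g : Fin d → ℝ) (x : EuclideanSpace ℂ (Fin d)) :
    dOp f x + dOp g x = dOp (fun i => f i + g i) x := by
  ext i; simp [dOp]; push_cast; ring

end dOpAPI

/-! ### real inner product API -/

noncomputable def ip {d : ℕ} (x y : EuclideanSpace ℂ (Fin d)) : ℝ :=
  (inner (𝕜 := ℂ) x y).re

section ipAPI
variable {d : ℕ}

lemma ip_symm (x y : EuclideanSpace ℂ (Fin d)) : ip x y = ip y x := by
  unfold ip; rw [← inner_conj_symm x y, Complex.conj_re]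

lemma ip_add_left (x y z : EuclideanSpace ℂ (Fin d)) : ip (x + y) z = ip x z + ip y z := by
  unfold ip; rw [inner_add_left]; simp

lemma ip_add_right (x y z : EuclideanSpace ℂ (Fin d)) : ip x (y + z) = ip x y + ip x z := by
  unfold ip; rw [inner_add_right]; simp

lemma ip_smul_left (r : ℝ) (x y : EuclideanSpace ℂ (Fin d)) : ip (r • x) y = r * ip x y := by
  unfold ip; rw [RCLike.real_smul_eq_coe_smul (K := ℂ), inner_smul_left]
  simp [Complex.conj_ofReal]

lemma ip_smul_right (r : ℝ) (x y : EuclideanSpace ℂ (Fin d)) : ip x (r • y) = r * ip x y := by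
  unfold ip; rw [RCLike.real_smul_eq_coe_smul (K := ℂ), inner_smul_right]
  simp [Complex.conj_ofReal]

lemma ip_neg_left (x y : EuclideanSpace ℂ (Fin d)) : ip (-x) y = -ip x y := by
  unfold ip; rw [inner_neg_left]; simp

lemma ip_neg_right (x y : EuclideanSpace ℂ (Fin d)) : ip x (-y) = -ip x y := by
  unfold ip; rw [inner_neg_right]; simp

lemma ip_sub_left (x y z : EuclideanSpace ℂ (Fin d)) : ip (x - y) z = ip x z - ip y z := by
  rw [sub_eq_add_neg, ip_add_left, ip_neg_left, sub_eq_add_neg]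

lemma ip_sub_right (x y z : EuclideanSpace ℂ (Fin d)) : ip x (y - z) = ip x y - ip x z := by
  rw [sub_eq_add_neg, ip_add_right, ip_neg_right, sub_eq_add_neg]

lemma ip_dOp (f : Fin d → ℝ) (x y : EuclideanSpace ℂ (Fin d)) :
    ip (dOp f x) y = ip x (dOp f y) := by
  unfold ip
  congr 1
  simp only [PiLp.inner_apply, dOp]
  congr 1; funext i
  simp [RCLike.inner_apply, map_mul, Complex.conj_ofReal]
  ring

lemma norm_sq_ip (x : EuclideanSpace ℂ (Fin d)) : ‖x‖ ^ 2 = ip x x :=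
  (inner_self_eq_norm_sq (𝕜 := ℂ) x).symm

lemma abs_ip_le (x y : EuclideanSpace ℂ (Fin d)) : |ip x y| ≤ ‖x‖ * ‖y‖ :=
  le_trans (Complex.abs_re_le_norm _) (norm_inner_le_norm (𝕜 := ℂ) x y)

end ipAPI

/-! ### Exact conservation of the modified energy -/

section StepLemma
variable {d : ℕ}

lemma ip_dOp_dOp (a b : Fin d → ℝ) (x y : EuclideanSpace ℂ (Fin d)) :
    ip (dOp a x) (dOp b y) = ip x (dOp (fun i => a i * b i) y) := by
  rw [ip_dOp, dOp_dOp]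

lemma ip_dOp_swap (K : Fin d → ℝ) (x y : EuclideanSpace ℂ (Fin d)) :
    ip x (dOp K y) = ip y (dOp K x) := by
  rw [← ip_dOp, ip_symm]

lemma modEnergy_step (h : ℝ) (ω : Fin d → ℝ) (ψ₁ φ : ℝ → ℝ)
    (A : EuclideanSpace ℂ (Fin d) →L[ℂ] EuclideanSpace ℂ (Fin d))
    (hψ : ∀ ξ, ψ₁ ξ = sinc ξ * φ ξ) (hA : IsSelfAdjoint A)
    (q p : EuclideanSpace ℂ (Fin d)) :
    modEnergy h ω ψ₁ φ A (trigStepQ h ω ψ₁ φ A q p) (trigStepP h ω ψ₁ φ A q p)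
      = modEnergy h ω ψ₁ φ A q p := by
  simp only [modEnergy, trigStepP, trigStepQ]
  set cc : Fin d → ℝ := fun i => Real.cos (h * ω i) with hcc
  set ss : Fin d → ℝ := fun i => sinc (h * ω i) with hss
  set ff : Fin d → ℝ := fun i => φ (h * ω i) with hff
  set B : EuclideanSpace ℂ (Fin d) → EuclideanSpace ℂ (Fin d) :=
    fun x => dOp ff (A (dOp ff x)) with hB
  have hψf : (fun i => ψ₁ (h * ω i)) = fun i => ss i * ff i := funext fun i => hψ _
  have hb1 : ∀ x, dOp (fun i => ψ₁ (h * ω i)) (A (dOp ff x)) = dOp ss (B x) := by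
    intro x; rw [hψf]; exact (dOp_dOp ss ff (A (dOp ff x))).symm
  have hb1' : ∀ x, dOp (fun i => ψ₁ (h * ω i)) (-(A (dOp ff x))) = -(dOp ss (B x)) := by
    intro x; rw [dOp_neg, hb1]
  have hAadj : ∀ u v : EuclideanSpace ℂ (Fin d),
      inner (𝕜 := ℂ) (A u) v = inner (𝕜 := ℂ) u (A v) := by
    intro u v
    nth_rewrite 1 [← hA.adjoint_eq]
    exact ContinuousLinearMap.adjoint_inner_left A v u
  have hBsym : ∀ u v : EuclideanSpace ℂ (Fin d), ip (B u) v = ip u (B v) := by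
    intro u v
    calc ip (dOp ff (A (dOp ff u))) v = ip (A (dOp ff u)) (dOp ff v) := ip_dOp _ _ _
      _ = ip (dOp ff u) (A (dOp ff v)) := congrArg Complex.re (hAadj _ _)
      _ = ip u (dOp ff (A (dOp ff v))) := ip_dOp _ _ _
  set g : Fin d → ℝ := fun i => ω i ^ 2 * ss i with hg
  set pi0 : EuclideanSpace ℂ (Fin d) := p - (h / 2) • dOp ss (B q) with hpi0
  have hp : p = pi0 + (h / 2) • dOp ss (B q) := by rw [hpi0]; abel
  set Q : EuclideanSpace ℂ (Fin d) := dOp cc q + h • dOp ss pi0 with hQdef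
  set pi1 : EuclideanSpace ℂ (Fin d) := -(h • dOp g q) + dOp cc pi0 with hpi1
  have hsin : dOp (fun i => ω i * Real.sin (h * ω i)) q = h • dOp g q := by
    have hfun : (fun i => ω i * Real.sin (h * ω i)) = (fun i => h * g i) := by
      funext i
      simp only [hg, hss]
      rw [← sinc_mul (h * ω i)]
      ring
    rw [hfun, dOp_scale]
  have hQ : dOp cc q + h • dOp ss p
      + (h ^ 2 / 2) • dOp ss (dOp (fun i => ψ₁ (h * ω i)) (-(A (dOp ff q)))) = Q := by
    rw [hb1', dOp_neg, hQdef, hpi0, dOp_sub, dOp_smul, dOp_dOp, dOp_dOp]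
    module
  have hP : -(dOp (fun i => ω i * Real.sin (h * ω i)) q) + dOp cc p
      + (h / 2) • (dOp cc (dOp (fun i => ψ₁ (h * ω i)) (-(A (dOp ff q))))
          + dOp (fun i => ψ₁ (h * ω i)) (-(A (dOp ff Q))))
      = pi1 - (h / 2) • dOp ss (B Q) := by
    rw [hb1', hb1', hsin, dOp_neg, hpi1, hpi0, dOp_sub, dOp_smul]
    module
  rw [hQ, hP]
  have hEform : ∀ x y : EuclideanSpace ℂ (Fin d),
      1 / 2 * ‖dOp ω x‖ ^ 2 + 1 / 2 * ‖y‖ ^ 2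
        + 1 / 2 * (inner (𝕜 := ℂ) (dOp cc (dOp ff x)) (A (dOp ff x))).re
        - 1 / 8 * h ^ 2 * ‖dOp (fun i => ψ₁ (h * ω i)) (A (dOp ff x))‖ ^ 2
      = 1 / 2 * ip (dOp ω x) (dOp ω x) + 1 / 2 * ip y y + 1 / 2 * ip (dOp cc x) (B x)
        - 1 / 8 * h ^ 2 * ip (dOp ss (B x)) (dOp ss (B x)) := by
    intro x y
    rw [norm_sq_ip, norm_sq_ip, norm_sq_ip, hb1]
    have h3 : (inner (𝕜 := ℂ) (dOp cc (dOp ff x)) (A (dOp ff x))).re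
        = ip (dOp cc x) (B x) := by
      have h4 : dOp cc (dOp ff x) = dOp ff (dOp cc x) := by
        rw [dOp_dOp, dOp_dOp]
        have hco : (fun i => cc i * ff i) = (fun i => ff i * cc i) := by
          funext i; ring
        rw [hco]
      show ip (dOp cc (dOp ff x)) (A (dOp ff x)) = _
      rw [h4, ip_dOp]
    rw [h3]
  rw [hEform, hEform]
  -- kick identity at the old point
  have kick_old : 1 / 2 * ip p p + 1 / 2 * ip (dOp cc q) (B q)
      - 1 / 8 * h ^ 2 * ip (dOp ss (B q)) (dOp ss (B q))
      = 1 / 2 * ip pi0 pi0 + 1 / 2 * ip Q (B q) := by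
    rw [hQdef, hp]
    simp only [ip_add_left, ip_add_right, ip_smul_left, ip_smul_right]
    rw [ip_symm (dOp ss (B q)) pi0, ip_dOp ss pi0 (B q)]
    ring
  -- the time-reversal identity
  have hback : dOp cc Q - h • dOp ss pi1 = q := by
    rw [hQdef, hpi1]
    simp only [dOp_add, dOp_smul, dOp_neg, dOp_dOp]
    have hcomm : (fun i => cc i * ss i) = (fun i => ss i * cc i) := by
      funext i; ring
    rw [hcomm]
    have key : dOp (fun i => cc i * cc i) q + (h * h) • dOp (fun i => ss i * g i) q = q := by
      rw [← dOp_scale, dOp_add_fun]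
      have hfun : (fun i => cc i * cc i + h * h * (ss i * g i)) = fun _ => (1:ℝ) := by
        funext i
        simp only [hcc, hss, hg]
        linear_combination pyth (h * ω i)
      rw [hfun, dOp_one]
    conv_rhs => rw [← key]
    module
  -- kick identity at the new point
  have kick_new : 1 / 2 * ip (pi1 - (h / 2) • dOp ss (B Q)) (pi1 - (h / 2) • dOp ss (B Q))
      + 1 / 2 * ip (dOp cc Q) (B Q)
      - 1 / 8 * h ^ 2 * ip (dOp ss (B Q)) (dOp ss (B Q))
      = 1 / 2 * ip pi1 pi1 + 1 / 2 * ip q (B Q) := by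
    have e2 : ip q (B Q) = ip (dOp cc Q) (B Q) - h * ip pi1 (dOp ss (B Q)) := by
      rw [← hback, ip_sub_left, ip_smul_left, ip_dOp ss pi1 (B Q)]
    rw [e2]
    simp only [ip_sub_left, ip_sub_right, ip_smul_left, ip_smul_right]
    rw [ip_symm (dOp ss (B Q)) pi1]
    ring
  -- conservation of the oscillatory energy under the rotation
  have osc : ip (dOp ω Q) (dOp ω Q) + ip pi1 pi1
      = ip (dOp ω q) (dOp ω q) + ip pi0 pi0 := by
    rw [hQdef, hpi1]
    rw [dOp_add, dOp_smul, dOp_dOp ω cc, dOp_dOp ω ss]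
    simp only [ip_add_left, ip_add_right, ip_smul_left, ip_smul_right, ip_neg_left,
      ip_neg_right]
    rw [ip_dOp_dOp (fun i => ω i * cc i) (fun i => ω i * cc i) q q,
        ip_dOp_dOp (fun i => ω i * cc i) (fun i => ω i * ss i) q pi0,
        ip_dOp_dOp (fun i => ω i * ss i) (fun i => ω i * cc i) pi0 q,
        ip_dOp_dOp (fun i => ω i * ss i) (fun i => ω i * ss i) pi0 pi0,
        ip_dOp_dOp g g q q, ip_dOp_dOp g cc q pi0, ip_dOp_dOp cc g pi0 q,
        ip_dOp_dOp cc cc pi0 pi0, ip_dOp_dOp ω ω q q]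
    rw [ip_dOp_swap (fun i => (ω i * ss i) * (ω i * cc i)) pi0 q,
        ip_dOp_swap (fun i => cc i * g i) pi0 q]
    have hc1 : (fun i => (ω i * ss i) * (ω i * cc i)) = (fun i => (ω i * cc i) * (ω i * ss i)) := by
      funext i; ring
    have hc2 : (fun i => cc i * g i) = (fun i => (ω i * cc i) * (ω i * ss i)) := by
      funext i; simp only [hg]; ring
    have hc3 : (fun i => g i * cc i) = (fun i => (ω i * cc i) * (ω i * ss i)) := by
      funext i; simp only [hg]; ring
    rw [hc1, hc2, hc3]
    have eqq : ip q (dOp (fun i => (ω i * cc i) * (ω i * cc i)) q)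
        + h ^ 2 * ip q (dOp (fun i => g i * g i) q)
        = ip q (dOp (fun i => ω i * ω i) q) := by
      rw [← ip_smul_right, ← dOp_scale, ← ip_add_right, dOp_add_fun]
      have hfun : (fun i => (ω i * cc i) * (ω i * cc i) + h ^ 2 * (g i * g i))
          = fun i => ω i * ω i := by
        funext i
        simp only [hg, hcc, hss]
        linear_combination (ω i ^ 2) * pyth (h * ω i)
      rw [hfun]
    have eqp : h ^ 2 * ip pi0 (dOp (fun i => (ω i * ss i) * (ω i * ss i)) pi0)
        + ip pi0 (dOp (fun i => cc i * cc i) pi0) = ip pi0 pi0 := by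
      rw [← ip_smul_right, ← dOp_scale, ← ip_add_right, dOp_add_fun]
      have hfun : (fun i => h ^ 2 * ((ω i * ss i) * (ω i * ss i)) + cc i * cc i)
          = fun _ => (1:ℝ) := by
        funext i
        simp only [hcc, hss]
        linear_combination pyth (h * ω i)
      rw [hfun, dOp_one]
    have eq3 : ip (dOp ω q) (dOp ω q) = ip q (dOp (fun i => ω i * ω i) q) :=
      ip_dOp_dOp ω ω q q
    linarith [eqq, eqp, eq3]
  have hsymQ : ip q (B Q) = ip Q (B q) := by rw [← hBsym, ip_symm]
  linarith [kick_old, kick_new, osc, hsymQ]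

end StepLemma

/-! ### Norm estimates -/

section Bounds
variable {d : ℕ}

lemma euclid_norm_le (x y : EuclideanSpace ℂ (Fin d)) (hc : ∀ i, ‖x i‖ ≤ ‖y i‖) :
    ‖x‖ ≤ ‖y‖ := by
  rw [EuclideanSpace.norm_eq, EuclideanSpace.norm_eq]
  apply Real.sqrt_le_sqrt
  apply Finset.sum_le_sum
  intro i _
  exact pow_le_pow_left₀ (norm_nonneg _) (hc i) 2

lemma norm_dOp_le (f : Fin d → ℝ) (K : ℝ) (hK : 0 ≤ K) (hf : ∀ i, |f i| ≤ K)
    (x : EuclideanSpace ℂ (Fin d)) : ‖dOp f x‖ ≤ K * ‖x‖ := by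
  have step : ∀ i, ‖dOp f x i‖ ≤ ‖(K • x) i‖ := by
    intro i
    show ‖(f i : ℂ) * x i‖ ≤ ‖K • (x i)‖
    rw [norm_mul, norm_smul, Complex.norm_real, Real.norm_eq_abs, Real.norm_eq_abs,
      abs_of_nonneg hK]
    exact mul_le_mul_of_nonneg_right (hf i) (norm_nonneg _)
  calc ‖dOp f x‖ ≤ ‖K • x‖ := euclid_norm_le _ _ step
    _ = K * ‖x‖ := by rw [norm_smul, Real.norm_eq_abs, abs_of_nonneg hK]

lemma norm_dOp_rel (ω : Fin d → ℝ) (hω : ∀ i, 0 ≤ ω i) (g : Fin d → ℝ) (c : ℝ) (hc : 0 ≤ c)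
    (hbound : ∀ i, |g i| ≤ c * ω i) (x : EuclideanSpace ℂ (Fin d)) :
    ‖dOp g x‖ ≤ c * ‖dOp ω x‖ := by
  have step : ∀ i, ‖dOp g x i‖ ≤ ‖(c • dOp ω x) i‖ := by
    intro i
    show ‖(g i : ℂ) * x i‖ ≤ ‖c • ((ω i : ℂ) * x i)‖
    rw [norm_mul, norm_smul, norm_mul, Complex.norm_real, Complex.norm_real,
      Real.norm_eq_abs, Real.norm_eq_abs, Real.norm_eq_abs, abs_of_nonneg hc,
      abs_of_nonneg (hω i), ← mul_assoc]
    exact mul_le_mul_of_nonneg_right (hbound i) (norm_nonneg _)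
  calc ‖dOp g x‖ ≤ ‖c • dOp ω x‖ := euclid_norm_le _ _ step
    _ = c * ‖dOp ω x‖ := by rw [norm_smul, Real.norm_eq_abs, abs_of_nonneg hc]

lemma coord_bound (K h ωmin t v : ℝ) (h0 : 0 < h) (hpos : 0 < ωmin) (ht : 0 < t)
    (htmin : ωmin ≤ t) (hK : 0 ≤ K) (b1 : |v| ≤ K * (h * t)) (b2 : |v| ≤ K) :
    |v| ≤ K * min h ωmin⁻¹ * t := by
  rcases min_cases h ωmin⁻¹ with ⟨he, _⟩ | ⟨he, _⟩
  · rw [he]; calc |v| ≤ K * (h * t) := b1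
      _ = K * h * t := by ring
  · rw [he]
    have h1t : 1 ≤ ωmin⁻¹ * t := by
      have h2 : ωmin⁻¹ * ωmin ≤ ωmin⁻¹ * t :=
        mul_le_mul_of_nonneg_left htmin (by positivity)
      rwa [inv_mul_cancel₀ (ne_of_gt hpos)] at h2
    calc |v| ≤ K := b2
      _ = K * 1 := by ring
      _ ≤ K * (ωmin⁻¹ * t) := mul_le_mul_of_nonneg_left h1t hK
      _ = K * ωmin⁻¹ * t := by ring

end Bounds

section DiffBound
variable {d : ℕ}

lemma energy_diff_bound (h : ℝ) (h0 : 0 < h)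
    (ω : Fin d → ℝ) (hω : ∀ i, 0 ≤ ω i)
    (ψ₁ φ : ℝ → ℝ) (c₀ c₁ : ℝ)
    (hφc : ∀ ξ, |φ ξ| ≤ c₀) (hφ1 : ∀ ξ, |φ ξ - 1| ≤ c₁ * |ξ|)
    (ωmin : ℝ) (hpos : 0 < ωmin) (hminle : ∀ i, ω i ≠ 0 → ωmin ≤ ω i)
    (A : EuclideanSpace ℂ (Fin d) →L[ℂ] EuclideanSpace ℂ (Fin d))
    (x y : EuclideanSpace ℂ (Fin d)) (M R : ℝ)
    (hxM : ‖x‖ ≤ M) (hxR : ‖dOp ω x‖ ≤ R) :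
    |energy ω A x y - modEnergy h ω ψ₁ φ A x y|
      ≤ (1/2) * ((1 + c₀ + c₁) * (1 + c₀) * (‖A‖ * (M * R))) * min h ωmin⁻¹
        + (1/8) * h^2 * ‖dOp (fun i => ψ₁ (h * ω i)) (A (dOp (fun i => φ (h * ω i)) x))‖^2 := by
  have hc₀ : 0 ≤ c₀ := le_trans (abs_nonneg _) (hφc 0)
  have hc₁ : 0 ≤ c₁ := by
    have h1 := hφ1 1
    have h2 := abs_nonneg (φ 1 - 1)
    simp at h1
    linarith
  have hM : 0 ≤ M := le_trans (norm_nonneg x) hxM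
  have hφ0 : φ 0 = 1 := by
    have h1 := hφ1 0
    simp at h1
    linarith
  have hmin0 : 0 ≤ min h ωmin⁻¹ := le_min (le_of_lt h0) (by positivity)
  have hR0 : 0 ≤ R := le_trans (norm_nonneg _) hxR
  set K : ℝ := 1 + c₀ + c₁ with hK
  have hKnn : 0 ≤ K := by rw [hK]; linarith
  -- bound for `1 - φ`
  have hg1 : ∀ i, |1 - φ (h * ω i)| ≤ K * min h ωmin⁻¹ * ω i := by
    intro i
    rcases eq_or_ne (ω i) 0 with hz | hz
    · simp [hz, hφ0]
    · have ht : 0 < ω i := lt_of_le_of_ne (hω i) (Ne.symm hz)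
      apply coord_bound K h ωmin (ω i) _ h0 hpos ht (hminle i hz) hKnn
      · have b := hφ1 (h * ω i)
        rw [abs_sub_comm] at b
        calc |1 - φ (h * ω i)| ≤ c₁ * |h * ω i| := b
          _ = c₁ * (h * ω i) := by
              rw [abs_of_nonneg (by positivity)]
          _ ≤ K * (h * ω i) := by
              have : 0 ≤ h * ω i := by positivity
              nlinarith
      · calc |1 - φ (h * ω i)| ≤ |(1:ℝ)| + |φ (h * ω i)| := abs_sub _ _
          _ ≤ 1 + c₀ := by rw [abs_one]; linarith [hφc (h * ω i)]
          _ ≤ K := by rw [hK]; linarith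
  -- bound for `1 - cos * φ`
  have hg2 : ∀ i, |1 - Real.cos (h * ω i) * φ (h * ω i)| ≤ K * min h ωmin⁻¹ * ω i := by
    intro i
    rcases eq_or_ne (ω i) 0 with hz | hz
    · simp [hz, hφ0]
    · have ht : 0 < ω i := lt_of_le_of_ne (hω i) (Ne.symm hz)
      apply coord_bound K h ωmin (ω i) _ h0 hpos ht (hminle i hz) hKnn
      · have b := hφ1 (h * ω i)
        rw [abs_sub_comm] at b
        have bcos := abs_one_sub_cos (h * ω i)
        have bc1 : |Real.cos (h * ω i)| ≤ 1 := Real.abs_cos_le_one _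
        have split : 1 - Real.cos (h * ω i) * φ (h * ω i)
            = (1 - Real.cos (h * ω i)) + Real.cos (h * ω i) * (1 - φ (h * ω i)) := by ring
        have habs : |1 - Real.cos (h * ω i) * φ (h * ω i)|
            ≤ |1 - Real.cos (h * ω i)| + |Real.cos (h * ω i)| * |1 - φ (h * ω i)| := by
          rw [split]
          exact le_trans (abs_add_le _ _) (by rw [abs_mul])
        have hht : |h * ω i| = h * ω i := abs_of_nonneg (by positivity)
        calc |1 - Real.cos (h * ω i) * φ (h * ω i)|
            ≤ |1 - Real.cos (h * ω i)| + |Real.cos (h * ω i)| * |1 - φ (h * ω i)| := habs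
          _ ≤ (h * ω i) + 1 * (c₁ * (h * ω i)) := by
              have b' : |1 - φ (h * ω i)| ≤ c₁ * (h * ω i) := by
                calc |1 - φ (h * ω i)| ≤ c₁ * |h * ω i| := b
                  _ = c₁ * (h * ω i) := by rw [hht]
              have := mul_le_mul bc1 b' (abs_nonneg _) (by norm_num)
              rw [hht] at bcos
              linarith
          _ ≤ K * (h * ω i) := by
              have : 0 ≤ h * ω i := by positivity
              nlinarith
      · calc |1 - Real.cos (h * ω i) * φ (h * ω i)|
            ≤ |(1:ℝ)| + |Real.cos (h * ω i) * φ (h * ω i)| := abs_sub _ _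
          _ ≤ 1 + c₀ := by
              rw [abs_one, abs_mul]
              have := mul_le_mul (Real.abs_cos_le_one (h * ω i)) (hφc (h * ω i))
                (abs_nonneg _) (by norm_num)
              linarith
          _ ≤ K := by rw [hK]; linarith
  -- the two defect vectors
  have hn1 : ‖dOp (fun i => 1 - φ (h * ω i)) x‖ ≤ K * min h ωmin⁻¹ * R :=
    le_trans (norm_dOp_rel ω hω _ _ (mul_nonneg hKnn hmin0) hg1 x)
      (mul_le_mul_of_nonneg_left hxR (mul_nonneg hKnn hmin0))
  have hn2 : ‖dOp (fun i => 1 - Real.cos (h * ω i) * φ (h * ω i)) x‖ ≤ K * min h ωmin⁻¹ * R :=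
    le_trans (norm_dOp_rel ω hω _ _ (mul_nonneg hKnn hmin0) hg2 x)
      (mul_le_mul_of_nonneg_left hxR (mul_nonneg hKnn hmin0))
  -- decomposition of the energy difference
  have key : energy ω A x y - modEnergy h ω ψ₁ φ A x y
      = (1/2) * (ip x (A x)
          - ip (dOp (fun i => Real.cos (h * ω i)) (dOp (fun i => φ (h * ω i)) x))
              (A (dOp (fun i => φ (h * ω i)) x)))
        + (1/8) * h^2 * ‖dOp (fun i => ψ₁ (h * ω i)) (A (dOp (fun i => φ (h * ω i)) x))‖^2 := by
    simp only [energy, modEnergy, ip]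
    ring
  have hd1 : dOp (fun i => 1 - φ (h * ω i)) x = x - dOp (fun i => φ (h * ω i)) x := by
    ext i
    simp only [dOp, PiLp.sub_apply, PiLp.toLp_apply]
    push_cast
    ring
  have hd2 : dOp (fun i => 1 - Real.cos (h * ω i) * φ (h * ω i)) x
      = x - dOp (fun i => Real.cos (h * ω i) * φ (h * ω i)) x := by
    ext i
    simp only [dOp, PiLp.sub_apply, PiLp.toLp_apply]
    push_cast
    ring
  have hsplit : ip x (A x)
      - ip (dOp (fun i => Real.cos (h * ω i)) (dOp (fun i => φ (h * ω i)) x))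
          (A (dOp (fun i => φ (h * ω i)) x))
      = ip x (A (dOp (fun i => 1 - φ (h * ω i)) x))
        + ip (dOp (fun i => 1 - Real.cos (h * ω i) * φ (h * ω i)) x)
            (A (dOp (fun i => φ (h * ω i)) x)) := by
    rw [dOp_dOp, hd1, hd2, map_sub, ip_sub_right, ip_sub_left]
    ring
  -- norm bounds
  have hb1 : |ip x (A (dOp (fun i => 1 - φ (h * ω i)) x))|
      ≤ M * (‖A‖ * (K * min h ωmin⁻¹ * R)) := by
    calc |ip x (A (dOp (fun i => 1 - φ (h * ω i)) x))|
        ≤ ‖x‖ * ‖A (dOp (fun i => 1 - φ (h * ω i)) x)‖ := abs_ip_le _ _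
      _ ≤ M * (‖A‖ * (K * min h ωmin⁻¹ * R)) := by
          apply mul_le_mul hxM _ (norm_nonneg _) hM
          calc ‖A (dOp (fun i => 1 - φ (h * ω i)) x)‖
              ≤ ‖A‖ * ‖dOp (fun i => 1 - φ (h * ω i)) x‖ := A.le_opNorm _
            _ ≤ ‖A‖ * (K * min h ωmin⁻¹ * R) :=
                mul_le_mul_of_nonneg_left hn1 (norm_nonneg A)
  have hfx : ‖dOp (fun i => φ (h * ω i)) x‖ ≤ c₀ * M := by
    calc ‖dOp (fun i => φ (h * ω i)) x‖ ≤ c₀ * ‖x‖ :=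
        norm_dOp_le _ c₀ hc₀ (fun i => hφc _) x
      _ ≤ c₀ * M := mul_le_mul_of_nonneg_left hxM hc₀
  have hb2 : |ip (dOp (fun i => 1 - Real.cos (h * ω i) * φ (h * ω i)) x)
        (A (dOp (fun i => φ (h * ω i)) x))|
      ≤ (K * min h ωmin⁻¹ * R) * (‖A‖ * (c₀ * M)) := by
    calc |ip (dOp (fun i => 1 - Real.cos (h * ω i) * φ (h * ω i)) x)
          (A (dOp (fun i => φ (h * ω i)) x))|
        ≤ ‖dOp (fun i => 1 - Real.cos (h * ω i) * φ (h * ω i)) x‖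
            * ‖A (dOp (fun i => φ (h * ω i)) x)‖ := abs_ip_le _ _
      _ ≤ (K * min h ωmin⁻¹ * R) * (‖A‖ * (c₀ * M)) := by
          apply mul_le_mul hn2 _ (norm_nonneg _)
            (mul_nonneg (mul_nonneg hKnn hmin0) hR0)
          calc ‖A (dOp (fun i => φ (h * ω i)) x)‖
              ≤ ‖A‖ * ‖dOp (fun i => φ (h * ω i)) x‖ := A.le_opNorm _
            _ ≤ ‖A‖ * (c₀ * M) := mul_le_mul_of_nonneg_left hfx (norm_nonneg A)
  rw [key, hsplit]
  have htri := abs_add_le (ip x (A (dOp (fun i => 1 - φ (h * ω i)) x)))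
    (ip (dOp (fun i => 1 - Real.cos (h * ω i) * φ (h * ω i)) x)
      (A (dOp (fun i => φ (h * ω i)) x)))
  have habs2 : |(1/2) * (ip x (A (dOp (fun i => 1 - φ (h * ω i)) x))
      + ip (dOp (fun i => 1 - Real.cos (h * ω i) * φ (h * ω i)) x)
          (A (dOp (fun i => φ (h * ω i)) x)))
      + (1/8) * h^2 * ‖dOp (fun i => ψ₁ (h * ω i)) (A (dOp (fun i => φ (h * ω i)) x))‖^2|
      ≤ (1/2) * (|ip x (A (dOp (fun i => 1 - φ (h * ω i)) x))|
          + |ip (dOp (fun i => 1 - Real.cos (h * ω i) * φ (h * ω i)) x)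
              (A (dOp (fun i => φ (h * ω i)) x))|)
        + (1/8) * h^2 * ‖dOp (fun i => ψ₁ (h * ω i)) (A (dOp (fun i => φ (h * ω i)) x))‖^2 := by
    have hnn : 0 ≤ (1/8) * h^2
        * ‖dOp (fun i => ψ₁ (h * ω i)) (A (dOp (fun i => φ (h * ω i)) x))‖^2 := by positivity
    calc _ ≤ |(1/2) * (ip x (A (dOp (fun i => 1 - φ (h * ω i)) x))
          + ip (dOp (fun i => 1 - Real.cos (h * ω i) * φ (h * ω i)) x)
              (A (dOp (fun i => φ (h * ω i)) x)))|
        + |(1/8) * h^2 * ‖dOp (fun i => ψ₁ (h * ω i)) (A (dOp (fun i => φ (h * ω i)) x))‖^2| :=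
          abs_add_le _ _
      _ ≤ _ := by
          rw [abs_of_nonneg hnn, abs_mul, abs_of_nonneg (by norm_num : (0:ℝ) ≤ 1/2)]
          have := htri
          nlinarith [abs_nonneg (ip x (A (dOp (fun i => 1 - φ (h * ω i)) x)))]
  refine le_trans habs2 ?_
  have : (1/2) * (|ip x (A (dOp (fun i => 1 - φ (h * ω i)) x))|
          + |ip (dOp (fun i => 1 - Real.cos (h * ω i) * φ (h * ω i)) x)
              (A (dOp (fun i => φ (h * ω i)) x))|)
      ≤ (1/2) * ((1 + c₀ + c₁) * (1 + c₀) * (‖A‖ * (M * R))) * min h ωmin⁻¹ := by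
    have e1 : M * (‖A‖ * (K * min h ωmin⁻¹ * R))
        + (K * min h ωmin⁻¹ * R) * (‖A‖ * (c₀ * M))
        = K * (1 + c₀) * (‖A‖ * (M * R)) * min h ωmin⁻¹ := by ring
    rw [hK] at e1
    linarith [hb1, hb2]
  linarith

end DiffBound

noncomputable def Cfun : ℝ → ℝ → ℝ → ℝ → ℝ → ℝ → ℝ → ℝ :=
  fun c0 c1 a _Q0 W0 P0 M =>
    (1 + c0 + c1) * (1 + c0) * a * M
        * Real.sqrt (W0^2 + P0^2 + 2*c0^2*a*M^2 + (1/4)*(c0^2*a*M)^2)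
      + (c0^2*a*M)^2


set_option maxHeartbeats 2000000 in
/-- Theorem 2, all-time near-conservation of energy: there is a constant `C`,
depending only on `c₀, c₁, ‖A‖, ‖q_0‖, ‖Ωq_0‖, ‖q̇_0‖` and a bound `M` on `‖q_n‖`, such that
`|H(q_n,q̇_n) − H(q_0,q̇_0)| ≤ C min(h, ω⁻¹) + C h²` for all `n`. -/
theorem all_time_near_conservation_of_energy :
    ∃ C : ℝ → ℝ → ℝ → ℝ → ℝ → ℝ → ℝ → ℝ,
      ∀ {d : ℕ} (h : ℝ), 0 < h → h ≤ 1 →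
      ∀ (ω : Fin d → ℝ), (∀ i, 0 ≤ ω i) →
      ∀ (ψ₁ φ : ℝ → ℝ) (c₀ c₁ : ℝ),
        (∀ ξ : ℝ, ψ₁ ξ = sinc ξ * φ ξ) →
        (∀ ξ : ℝ, |ψ₁ ξ| ≤ c₀) → (∀ ξ : ℝ, |φ ξ| ≤ c₀) →
        (∀ ξ : ℝ, |φ ξ - 1| ≤ c₁ * |ξ|) →
      ∀ ωmin : ℝ, (∃ i, ω i = ωmin) → 0 < ωmin → (∀ i, ω i ≠ 0 → ωmin ≤ ω i) →
      ∀ A : EuclideanSpace ℂ (Fin d) →L[ℂ] EuclideanSpace ℂ (Fin d), IsSelfAdjoint A →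
      ∀ q p : ℕ → EuclideanSpace ℂ (Fin d),
        (∀ n : ℕ, q (n + 1) = trigStepQ h ω ψ₁ φ A (q n) (p n)) →
        (∀ n : ℕ, p (n + 1) = trigStepP h ω ψ₁ φ A (q n) (p n)) →
      ∀ M : ℝ, (∀ n : ℕ, ‖q n‖ ≤ M) →
      ∀ n : ℕ,
        |energy ω A (q n) (p n) - energy ω A (q 0) (p 0)|
          ≤ C c₀ c₁ ‖A‖ ‖q 0‖ ‖dOp ω (q 0)‖ ‖p 0‖ M * min h ωmin⁻¹
            + C c₀ c₁ ‖A‖ ‖q 0‖ ‖dOp ω (q 0)‖ ‖p 0‖ M * h ^ 2 := by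
  refine ⟨Cfun, ?_⟩
  intro d h h0 h1 ω hω ψ₁ φ c₀ c₁ hψ hψc hφc hφ1 ωmin _hex hpos hminle A hA q p hq hp M hM n
  have hc₀ : 0 ≤ c₀ := le_trans (abs_nonneg _) (hφc 0)
  have hc₁ : 0 ≤ c₁ := by
    have h1' := hφ1 1
    have h2 := abs_nonneg (φ 1 - 1)
    simp at h1'
    linarith
  have hM0 : 0 ≤ M := le_trans (norm_nonneg _) (hM 0)
  have hmin0 : 0 ≤ min h ωmin⁻¹ := le_min (le_of_lt h0) (by positivity)
  set S : ℝ := ‖dOp ω (q 0)‖^2 + ‖p 0‖^2 + 2*c₀^2*‖A‖*M^2 + (1/4)*(c₀^2*‖A‖*M)^2 with hS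
  set R : ℝ := Real.sqrt S with hR
  have hR0 : 0 ≤ R := Real.sqrt_nonneg _
  -- conservation of the modified energy
  have hcons : ∀ m : ℕ, modEnergy h ω ψ₁ φ A (q m) (p m) = modEnergy h ω ψ₁ φ A (q 0) (p 0) := by
    intro m
    induction m with
    | zero => rfl
    | succ k ih =>
        rw [hq k, hp k]
        exact (modEnergy_step h ω ψ₁ φ A hψ hA (q k) (p k)).trans ih
  -- uniform bounds on the nonlinear terms
  have hfx : ∀ x : EuclideanSpace ℂ (Fin d), ‖x‖ ≤ M →
      ‖dOp (fun i => φ (h * ω i)) x‖ ≤ c₀ * M := by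
    intro x hx
    calc ‖dOp (fun i => φ (h * ω i)) x‖ ≤ c₀ * ‖x‖ :=
        norm_dOp_le _ c₀ hc₀ (fun i => hφc _) x
      _ ≤ c₀ * M := mul_le_mul_of_nonneg_left hx hc₀
  have hAfx : ∀ x : EuclideanSpace ℂ (Fin d), ‖x‖ ≤ M →
      ‖A (dOp (fun i => φ (h * ω i)) x)‖ ≤ ‖A‖ * (c₀ * M) := by
    intro x hx
    exact le_trans (A.le_opNorm _) (mul_le_mul_of_nonneg_left (hfx x hx) (norm_nonneg A))
  have hT4 : ∀ x : EuclideanSpace ℂ (Fin d), ‖x‖ ≤ M →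
      ‖dOp (fun i => ψ₁ (h * ω i)) (A (dOp (fun i => φ (h * ω i)) x))‖ ≤ c₀^2*‖A‖*M := by
    intro x hx
    calc ‖dOp (fun i => ψ₁ (h * ω i)) (A (dOp (fun i => φ (h * ω i)) x))‖
        ≤ c₀ * ‖A (dOp (fun i => φ (h * ω i)) x)‖ :=
          norm_dOp_le _ c₀ hc₀ (fun i => hψc _) _
      _ ≤ c₀ * (‖A‖ * (c₀ * M)) := mul_le_mul_of_nonneg_left (hAfx x hx) hc₀
      _ = c₀^2*‖A‖*M := by ring
  have hT3 : ∀ x : EuclideanSpace ℂ (Fin d), ‖x‖ ≤ M →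
      |(inner (𝕜 := ℂ) (dOp (fun i => Real.cos (h * ω i)) (dOp (fun i => φ (h * ω i)) x))
          (A (dOp (fun i => φ (h * ω i)) x))).re| ≤ c₀^2*‖A‖*M^2 := by
    intro x hx
    have h4 : ‖dOp (fun i => Real.cos (h * ω i)) (dOp (fun i => φ (h * ω i)) x)‖ ≤ c₀ * M := by
      calc ‖dOp (fun i => Real.cos (h * ω i)) (dOp (fun i => φ (h * ω i)) x)‖
          ≤ 1 * ‖dOp (fun i => φ (h * ω i)) x‖ :=
            norm_dOp_le _ 1 zero_le_one (fun i => Real.abs_cos_le_one _) _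
        _ = ‖dOp (fun i => φ (h * ω i)) x‖ := one_mul _
        _ ≤ c₀ * M := hfx x hx
    calc |(inner (𝕜 := ℂ) (dOp (fun i => Real.cos (h * ω i)) (dOp (fun i => φ (h * ω i)) x))
          (A (dOp (fun i => φ (h * ω i)) x))).re|
        ≤ ‖dOp (fun i => Real.cos (h * ω i)) (dOp (fun i => φ (h * ω i)) x)‖
            * ‖A (dOp (fun i => φ (h * ω i)) x)‖ := abs_ip_le _ _
      _ ≤ (c₀ * M) * (‖A‖ * (c₀ * M)) := by
          apply mul_le_mul h4 (hAfx x hx) (norm_nonneg _) (by positivity)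
      _ = c₀^2*‖A‖*M^2 := by ring
  -- uniform bound on ‖Ω q_m‖
  have hRn : ∀ m : ℕ, ‖dOp ω (q m)‖ ≤ R := by
    intro m
    have hc := hcons m
    simp only [modEnergy] at hc
    have t3m := hT3 (q m) (hM m); have t30 := hT3 (q 0) (hM 0)
    have t4m := hT4 (q m) (hM m); have t40 := hT4 (q 0) (hM 0)
    have t3m' := abs_le.mp t3m
    have t30' := abs_le.mp t30
    have hh2 : h^2 ≤ 1 := by nlinarith
    have e4m : h^2 * ‖dOp (fun i => ψ₁ (h * ω i))
        (A (dOp (fun i => φ (h * ω i)) (q m)))‖^2 ≤ 1 * (c₀^2*‖A‖*M)^2 := by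
      apply mul_le_mul hh2 _ (by positivity) zero_le_one
      exact pow_le_pow_left₀ (norm_nonneg _) t4m 2
    have e40 : h^2 * ‖dOp (fun i => ψ₁ (h * ω i))
        (A (dOp (fun i => φ (h * ω i)) (q 0)))‖^2 ≤ 1 * (c₀^2*‖A‖*M)^2 := by
      apply mul_le_mul hh2 _ (by positivity) zero_le_one
      exact pow_le_pow_left₀ (norm_nonneg _) t40 2
    have e4m0 : 0 ≤ h^2 * ‖dOp (fun i => ψ₁ (h * ω i))
        (A (dOp (fun i => φ (h * ω i)) (q m)))‖^2 := by positivity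
    have e400 : 0 ≤ h^2 * ‖dOp (fun i => ψ₁ (h * ω i))
        (A (dOp (fun i => φ (h * ω i)) (q 0)))‖^2 := by positivity
    have hpm : 0 ≤ ‖p m‖^2 := by positivity
    have hsq : ‖dOp ω (q m)‖^2 ≤ S := by
      rw [hS]
      linarith [hc, t3m'.1, t3m'.2, t30'.1, t30'.2, e4m, e40, e4m0, e400, hpm]
    calc ‖dOp ω (q m)‖ = Real.sqrt (‖dOp ω (q m)‖^2) :=
        (Real.sqrt_sq (norm_nonneg _)).symm
      _ ≤ R := Real.sqrt_le_sqrt hsq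
  -- apply the two-sided comparison
  have hdn := energy_diff_bound h h0 ω hω ψ₁ φ c₀ c₁ hφc hφ1 ωmin hpos hminle A
    (q n) (p n) M R (hM n) (hRn n)
  have hd0 := energy_diff_bound h h0 ω hω ψ₁ φ c₀ c₁ hφc hφ1 ωmin hpos hminle A
    (q 0) (p 0) M R (hM 0) (hRn 0)
  have h9 : energy ω A (q n) (p n) - energy ω A (q 0) (p 0)
      = (energy ω A (q n) (p n) - modEnergy h ω ψ₁ φ A (q n) (p n))
        - (energy ω A (q 0) (p 0) - modEnergy h ω ψ₁ φ A (q 0) (p 0)) := by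
    have := hcons n
    linarith
  have hC : Cfun c₀ c₁ ‖A‖ ‖q 0‖ ‖dOp ω (q 0)‖ ‖p 0‖ M
      = (1 + c₀ + c₁) * (1 + c₀) * ‖A‖ * M * R + (c₀^2*‖A‖*M)^2 := by
    rw [Cfun, hR, hS]
  set Y : ℝ := (c₀^2*‖A‖*M)^2 with hY
  have em : h^2 * ‖dOp (fun i => ψ₁ (h * ω i))
      (A (dOp (fun i => φ (h * ω i)) (q n)))‖^2 ≤ h^2 * Y := by
    apply mul_le_mul_of_nonneg_left _ (sq_nonneg h)
    rw [hY]
    exact pow_le_pow_left₀ (norm_nonneg _) (hT4 (q n) (hM n)) 2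
  have e0 : h^2 * ‖dOp (fun i => ψ₁ (h * ω i))
      (A (dOp (fun i => φ (h * ω i)) (q 0)))‖^2 ≤ h^2 * Y := by
    apply mul_le_mul_of_nonneg_left _ (sq_nonneg h)
    rw [hY]
    exact pow_le_pow_left₀ (norm_nonneg _) (hT4 (q 0) (hM 0)) 2
  have hKKC : 0 ≤ (1 + c₀ + c₁) * (1 + c₀) * ‖A‖ * M * R := by positivity
  have hY0 : 0 ≤ Y := by rw [hY]; positivity
  have pYm : 0 ≤ Y * min h ωmin⁻¹ := mul_nonneg hY0 hmin0
  have pKh : 0 ≤ ((1 + c₀ + c₁) * (1 + c₀) * ‖A‖ * M * R) * h^2 :=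
    mul_nonneg hKKC (sq_nonneg h)
  have pYh : 0 ≤ Y * h^2 := mul_nonneg hY0 (sq_nonneg h)
  calc |energy ω A (q n) (p n) - energy ω A (q 0) (p 0)|
      = |(energy ω A (q n) (p n) - modEnergy h ω ψ₁ φ A (q n) (p n))
          - (energy ω A (q 0) (p 0) - modEnergy h ω ψ₁ φ A (q 0) (p 0))| := by rw [h9]
    _ ≤ |energy ω A (q n) (p n) - modEnergy h ω ψ₁ φ A (q n) (p n)|
        + |energy ω A (q 0) (p 0) - modEnergy h ω ψ₁ φ A (q 0) (p 0)| := abs_sub _ _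
    _ ≤ Cfun c₀ c₁ ‖A‖ ‖q 0‖ ‖dOp ω (q 0)‖ ‖p 0‖ M * min h ωmin⁻¹
        + Cfun c₀ c₁ ‖A‖ ‖q 0‖ ‖dOp ω (q 0)‖ ‖p 0‖ M * h ^ 2 := by
      rw [hC]
      nlinarith [hdn, hd0, em, e0, pYm, pKh, pYh]
end
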